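/- Let R be a ring and let T be a right R-module that is partial cosilting with respect to an injective copresentation ζ : Q₀ → Q₁. Then Cogen(T) ⊆ 𝓑_ζ ⊆ ⊥T. -/

import Mathlib

universe u v

open Function

variable (R : Type u) [Ring R]

/-- `X ∈ 𝓑_ζ`: every map `X → Q₁` factors through `ζ`. -/
def MemB {Q₀ Q₁ : Type v} [AddCommGroup Q₀] [Module R Q₀] [AddCommGroup Q₁] [Module R Q₁]
    (ζ : Q₀ →ₗ[R] Q₁) (X : Type v) [AddCommGroup X] [Module R X] : Prop :=
  Surjective fun g : X →ₗ[R] Q₀ => ζ ∘ₗ g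

/-- `X ∈ Cogen T`: `X` embeds into a direct product of copies of `T`. -/
def MemCogen (T : Type v) [AddCommGroup T] [Module R T]
    (X : Type v) [AddCommGroup X] [Module R X] : Prop :=
  ∃ (ι : Type v) (f : X →ₗ[R] (ι → T)), Injective f

/-- `Ext¹_R(X,T) = 0`, expressed as: every short exact sequence `0 → T → Y → X → 0` splits. -/
def Ext1Vanishes (X T : Type v) [AddCommGroup X] [Module R X] [AddCommGroup T] [Module R T] :
    Prop :=
  ∀ (Y : Type v) [AddCommGroup Y] [Module R Y] (i : T →ₗ[R] Y) (p : Y →ₗ[R] X),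
    Injective i → Surjective p → LinearMap.range i = LinearMap.ker p →
    ∃ s : X →ₗ[R] Y, p ∘ₗ s = LinearMap.id

/-- If `T` is partial cosilting with respect to the injective copresentation `ζ`,
then `Cogen T ⊆ 𝓑_ζ ⊆ ⊥T`. -/
theorem stmt_4 {Q₀ Q₁ : Type v} [AddCommGroup Q₀] [Module R Q₀] [AddCommGroup Q₁] [Module R Q₁]
    (ζ : Q₀ →ₗ[R] Q₁) [Module.Injective R Q₀] [Module.Injective R Q₁]
    (T : Type v) [AddCommGroup T] [Module R T]
    (f : T →ₗ[R] Q₀) (hf : Injective f) (hex : LinearMap.range f = LinearMap.ker ζ)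
    (hT : MemB R ζ T)
    (hprod : ∀ (ι : Type v) (M : ι → Type v) [∀ i, AddCommGroup (M i)] [∀ i, Module R (M i)],
      (∀ i, MemB R ζ (M i)) → MemB R ζ (∀ i, M i)) :
    (∀ (X : Type v) [AddCommGroup X] [Module R X], MemCogen R T X → MemB R ζ X) ∧
    (∀ (X : Type v) [AddCommGroup X] [Module R X], MemB R ζ X → Ext1Vanishes R X T) := by
  constructor
  · -- Cogen T ⊆ 𝓑_ζ
    rintro X _ _ ⟨ι, e, he⟩ g
    -- extend g along the embedding e into T^ι, using injectivity of Q₁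
    obtain ⟨g1, hg1⟩ := Module.Injective.out e he g
    -- T^ι ∈ 𝓑_ζ by closure under products
    obtain ⟨h, hh⟩ := hprod ι (fun _ => T) (fun _ => hT) g1
    refine ⟨h ∘ₗ e, ?_⟩
    ext x
    have := congrFun (congrArg (DFunLike.coe) hh) (e x)
    simpa [hg1 x] using this
  · -- 𝓑_ζ ⊆ ⊥T
    intro X _ _ hX Y _ _ i p hi hp hexact
    -- extend f : T → Q₀ along i : T → Y
    obtain ⟨φ, hφ⟩ := Module.Injective.out i hi f
    -- ζ ∘ φ kills ker p = range i, so factors through X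
    have hker : LinearMap.ker p ≤ LinearMap.ker (ζ ∘ₗ φ) := by
      intro y hy
      rw [← hexact] at hy
      obtain ⟨t, rfl⟩ := hy
      have : f t ∈ LinearMap.ker ζ := hex ▸ LinearMap.mem_range_self f t
      simpa [hφ t] using this
    let eX : (Y ⧸ LinearMap.ker p) ≃ₗ[R] X := p.quotKerEquivOfSurjective hp
    let ψ : X →ₗ[R] Q₁ := (Submodule.liftQ _ (ζ ∘ₗ φ) hker) ∘ₗ (eX.symm : X →ₗ[R] _)
    have hψ : ∀ y : Y, ψ (p y) = ζ (φ y) := by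
      intro y
      have : eX.symm (p y) = Submodule.Quotient.mk y := by
        apply eX.injective
        simp [eX, LinearMap.quotKerEquivOfSurjective]
      simp [ψ, this]
    -- factor ψ through ζ using X ∈ 𝓑_ζ
    obtain ⟨h, hh⟩ := hX ψ
    have hhψ : ∀ x : X, ζ (h x) = ψ x := fun x =>
      congrFun (congrArg (DFunLike.coe) hh) x
    -- φ - h∘p has range in ker ζ = range f, so factors through T
    set δ : Y →ₗ[R] Q₀ := φ - h ∘ₗ p with hδ
    have hδrange : ∀ y, δ y ∈ LinearMap.range f := by
      intro y
      rw [hex, LinearMap.mem_ker]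
      simp [hδ, hhψ, hψ y]
    let eT : T ≃ₗ[R] LinearMap.range f := LinearEquiv.ofInjective f hf
    let θ : Y →ₗ[R] T := (eT.symm : LinearMap.range f →ₗ[R] T) ∘ₗ
      (LinearMap.codRestrict _ δ hδrange)
    have hfθ : ∀ y, f (θ y) = δ y := by
      intro y
      have : f (eT.symm ⟨δ y, hδrange y⟩) = ((⟨δ y, hδrange y⟩ : LinearMap.range f) : Q₀) := by
        have := eT.apply_symm_apply ⟨δ y, hδrange y⟩
        exact congrArg Subtype.val this
      exact this
    -- θ ∘ i = id
    have hθi : ∀ t, θ (i t) = t := by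
      intro t
      apply hf
      have hpi : p (i t) = 0 := by
        have : i t ∈ LinearMap.ker p := hexact ▸ LinearMap.mem_range_self i t
        simpa using this
      rw [hfθ]
      simp [hδ, hφ t, hpi]
    -- build the section s : X → Y from the retraction θ
    let σ : Y →ₗ[R] Y := LinearMap.id - i ∘ₗ θ
    have hσker : LinearMap.ker p ≤ LinearMap.ker σ := by
      intro y hy
      rw [← hexact] at hy
      obtain ⟨t, rfl⟩ := hy
      simp [σ, hθi t]
    let s : X →ₗ[R] Y := (Submodule.liftQ _ σ hσker) ∘ₗ (eX.symm : X →ₗ[R] _)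
    refine ⟨s, ?_⟩
    ext x
    obtain ⟨y, rfl⟩ := hp x
    have hmk : eX.symm (p y) = Submodule.Quotient.mk y := by
      apply eX.injective
      simp [eX, LinearMap.quotKerEquivOfSurjective]
    have hpi : ∀ t, p (i t) = 0 := by
      intro t
      have : i t ∈ LinearMap.ker p := hexact ▸ LinearMap.mem_range_self i t
      simpa using this
    simp [s, hmk, σ, hpi]
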